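/- Let I be a small cofiltered category, let Y : I → (simplicial profinite sets) be a diagram with limit lim_i Y_i (computed levelwise), let M be a finite abelian group with the discrete topology, and let n ≥ 0. Then the canonical maps colim_i C^n(Y_i; M) → C^n(lim_i Y_i; M) and colim_i Z^n(Y_i; M) → Z^n(lim_i Y_i; M) are bijective. -/

import Mathlib

universe u

open CategoryTheory Simplicial Limits Opposite

namespace ProfiniteCochains

instance (priority := 100) discreteTopologicalAddGroup
    (M : Type*) [TopologicalSpace M] [DiscreteTopology M] [AddGroup M] :
    IsTopologicalAddGroup M where
  continuous_add := continuous_of_discreteTopology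
  continuous_neg := continuous_of_discreteTopology

variable (M : Type u) [AddCommGroup M] [TopologicalSpace M] [IsTopologicalAddGroup M]

/-- The differential `δ : C^n(X;M) → C^{n+1}(X;M)`, `δ(α) = ∑ₖ (-1)^k α ∘ dₖ`. -/
noncomputable def delta (X : SimplicialObject Profinite.{u}) (n : ℕ)
    (α : C(X.obj (op (SimplexCategory.mk n)), M)) :
    C(X.obj (op (SimplexCategory.mk (n + 1))), M) :=
  ∑ k : Fin (n + 2), (-1 : ℤ) ^ (k : ℕ) • α.comp (ConcreteCategory.hom (C := Profinite.{u}) (X.δ k))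

variable (I : Type u) [SmallCategory I] (Y : I ⥤ SimplicialObject Profinite.{u}) (n : ℕ)

/-- The filtered diagram of continuous `n`-cochains `i ↦ C^n(Y_i; M)`. -/
noncomputable def CnF : Iᵒᵖ ⥤ Type u where
  obj i := C((Y.obj i.unop).obj (op (SimplexCategory.mk n)), M)
  map f := TypeCat.ofHom fun g => g.comp (ConcreteCategory.hom (C := Profinite.{u}) ((Y.map f.unop).app (op (SimplexCategory.mk n))))

lemma pi_app_eq {i j : Iᵒᵖ} (f : i ⟶ j) :
    (ContinuousMap.comp (ConcreteCategory.hom (C := Profinite.{u}) ((Y.map f.unop).app (op (SimplexCategory.mk n))))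
      (ConcreteCategory.hom (C := Profinite.{u}) ((limit.π Y j.unop).app (op (SimplexCategory.mk n)))) :
        C((limit Y).obj (op (SimplexCategory.mk n)), _)) =
    ConcreteCategory.hom (C := Profinite.{u}) ((limit.π Y i.unop).app (op (SimplexCategory.mk n))) := by
  exact congrArg (fun (t : limit Y ⟶ Y.obj i.unop) =>
    (ConcreteCategory.hom (C := Profinite.{u}) (t.app (op (SimplexCategory.mk n))) : C(_, _))) (limit.w Y f.unop)

/-- The canonical cocone on `i ↦ C^n(Y_i; M)` with point `C^n(lim_i Y_i; M)`, given by
composition with the projections of the limit. -/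
noncomputable def CnCocone : Cocone (CnF M I Y n) where
  pt := C((limit Y).obj (op (SimplexCategory.mk n)), M)
  ι :=
    { app := fun i => TypeCat.ofHom fun g => g.comp (ConcreteCategory.hom (C := Profinite.{u}) ((limit.π Y i.unop).app (op (SimplexCategory.mk n))))
      naturality := fun i j f => by
        ext g : 3
        show ((g : C((Y.obj i.unop).obj (op (SimplexCategory.mk n)), M)).comp _).comp _ = _
        exact congrArg (fun h => ContinuousMap.comp (g : C(_, M)) h) (pi_app_eq I Y n f) }

lemma delta_comp {X Z : SimplicialObject Profinite.{u}} (f : X ⟶ Z) (m : ℕ)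
    (α : C(Z.obj (op (SimplexCategory.mk m)), M)) :
    delta M X m (α.comp (ConcreteCategory.hom (C := Profinite.{u}) (f.app (op (SimplexCategory.mk m))))) =
      (delta M Z m α).comp (ConcreteCategory.hom (C := Profinite.{u}) (f.app (op (SimplexCategory.mk (m + 1))))) := by
  ext x
  simp only [delta, ContinuousMap.coe_sum, Finset.sum_apply, ContinuousMap.comp_apply,
    ContinuousMap.coe_smul, Pi.smul_apply, ContinuousMap.coe_zsmul]
  refine Finset.sum_congr rfl fun k _ => ?_
  congr 1
  have h : (ConcreteCategory.hom (C := Profinite.{u}) (f.app (op (SimplexCategory.mk m)))).comp (ConcreteCategory.hom (C := Profinite.{u}) (X.δ k) : C(_, _)) =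
      (ConcreteCategory.hom (C := Profinite.{u}) (Z.δ k) : C(_, _)).comp (ConcreteCategory.hom (C := Profinite.{u}) (f.app (op (SimplexCategory.mk (m + 1))))) :=
    congrArg (ConcreteCategory.hom (C := Profinite.{u})) (f.naturality _)
  exact congrArg α (ContinuousMap.congr_fun h x)

/-- The filtered diagram of continuous `n`-cocycles `i ↦ Z^n(Y_i; M)`. -/
noncomputable def ZnF : Iᵒᵖ ⥤ Type u where
  obj i := { α : C((Y.obj i.unop).obj (op (SimplexCategory.mk n)), M) //
    delta M (Y.obj i.unop) n α = 0 }
  map f := TypeCat.ofHom fun g => ⟨g.1.comp (ConcreteCategory.hom (C := Profinite.{u}) ((Y.map f.unop).app (op (SimplexCategory.mk n)))), by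
    rw [delta_comp, g.2]
    ext x
    rfl⟩
  map_id i := by
    ext g : 3
    apply Subtype.ext
    show g.1.comp (ConcreteCategory.hom (C := Profinite.{u}) ((Y.map (𝟙 i.unop)).app (op (SimplexCategory.mk n)))) = g.1
    rw [CategoryTheory.Functor.map_id]
    rfl
  map_comp f g := by
    ext h : 3
    apply Subtype.ext
    show h.1.comp (ConcreteCategory.hom (C := Profinite.{u}) ((Y.map (g.unop ≫ f.unop)).app (op (SimplexCategory.mk n)))) =
      (h.1.comp (ConcreteCategory.hom (C := Profinite.{u}) ((Y.map f.unop).app (op (SimplexCategory.mk n))))).comp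
        (ConcreteCategory.hom (C := Profinite.{u}) ((Y.map g.unop).app (op (SimplexCategory.mk n))))
    rw [CategoryTheory.Functor.map_comp]
    rfl

/-- The canonical cocone on `i ↦ Z^n(Y_i; M)` with point `Z^n(lim_i Y_i; M)`. -/
noncomputable def ZnCocone : Cocone (ZnF M I Y n) where
  pt := { α : C((limit Y).obj (op (SimplexCategory.mk n)), M) //
    delta M (limit Y) n α = 0 }
  ι :=
    { app := fun i => TypeCat.ofHom fun g => ⟨g.1.comp (ConcreteCategory.hom (C := Profinite.{u}) ((limit.π Y i.unop).app (op (SimplexCategory.mk n)))), by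
        rw [delta_comp, g.2]
        ext x
        rfl⟩
      naturality := fun i j f => by
        ext g : 3
        apply Subtype.ext
        show (g.1.comp _).comp _ = _
        rw [ContinuousMap.comp_assoc, pi_app_eq]
        rfl }

end ProfiniteCochains

open ProfiniteCochains

local notation "𝔥" => ConcreteCategory.hom (C := Profinite)

section Aux

attribute [local instance] CategoryTheory.ConcreteCategory.instFunLike

variable {I : Type u} [SmallCategory I] [IsCofiltered I]


attribute [local instance] CategoryTheory.ConcreteCategory.instFunLike

variable {I : Type u} [SmallCategory I] [IsCofiltered I]

lemma exists_comp_eq_of_comp_pi_eq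
    (F : I ⥤ Profinite.{u}) (M : Type u) [TopologicalSpace M] [DiscreteTopology M]
    (C : Cone F) (hC : IsLimit C) (i : I) (g g' : C(F.obj i, M))
    (h : ∀ x : C.pt, g (C.π.app i x) = g' (C.π.app i x)) :
    ∃ (j : I) (f : j ⟶ i), ∀ y : F.obj j, g (F.map f y) = g' (F.map f y) := by
  by_contra hcon
  push_neg at hcon
  let T := Over.forget i
  have key : ∀ {e e' : Over i} (φ : e ⟶ e') (y : (F.obj e.left : Type u)),
      g (F.map e.hom y) ≠ g' (F.map e.hom y) →
      g (F.map e'.hom (F.map φ.left y)) ≠ g' (F.map e'.hom (F.map φ.left y)) := by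
    intro e e' φ y hy
    have hw : F.map φ.left ≫ F.map e'.hom = F.map e.hom := by
      rw [← F.map_comp, Over.w φ]
    have hyy : F.map e'.hom (F.map φ.left y) = F.map e.hom y := by
      have := congrArg (fun (t : F.obj e.left ⟶ F.obj i) => t y) hw
      simpa using this
    rw [hyy]; exact hy
  let G : Over i ⥤ TopCat.{u} :=
    { obj := fun e => TopCat.of {y : F.obj e.left // g (F.map e.hom y) ≠ g' (F.map e.hom y)}
      map := fun {e e'} φ =>
        TopCat.ofHom ⟨fun y => ⟨F.map φ.left y.1, key φ y.1 y.2⟩,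
          Continuous.subtype_mk ((𝔥 (F.map φ.left)).continuous.comp continuous_subtype_val) _⟩
      map_id := fun e => by
        ext y
        show (F.map (𝟙 e.left)) y.1 = y.1
        rw [F.map_id]
        rfl
      map_comp := fun {a b c} φ ψ => by
        ext y
        show (F.map (φ.left ≫ ψ.left)) y.1 = F.map ψ.left (F.map φ.left y.1)
        rw [F.map_comp]; rfl }
  have hne : ∀ e : Over i, Nonempty (G.obj e) := fun e => by
    obtain ⟨y, hy⟩ := hcon e.left e.hom
    exact ⟨⟨y, hy⟩⟩
  have hcl : ∀ e : Over i,
      IsClosed (setOf fun y : F.obj e.left => g (F.map e.hom y) ≠ g' (F.map e.hom y)) := fun e => by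
    have : (setOf fun y : F.obj e.left => g (F.map e.hom y) ≠ g' (F.map e.hom y)) =
        (fun y : F.obj e.left => (g (F.map e.hom y), g' (F.map e.hom y))) ⁻¹'
          (setOf fun p : M × M => p.1 ≠ p.2) := rfl
    rw [this]
    exact (isClosed_discrete _).preimage
      (((g.continuous.comp (𝔥 (F.map e.hom)).continuous).prodMk
        (g'.continuous.comp (𝔥 (F.map e.hom)).continuous)))
  have hcs : ∀ e : Over i, CompactSpace (G.obj e) := fun e =>
    isCompact_iff_compactSpace.mp ((hcl e).isCompact)
  have ht2 : ∀ e : Over i, T2Space (G.obj e) := fun e =>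
    inferInstanceAs (T2Space {y : F.obj e.left // g (F.map e.hom y) ≠ g' (F.map e.hom y)})
  obtain ⟨u0⟩ := @TopCat.nonempty_limitCone_of_compact_t2_cofiltered_system.{u, u} _ _ G _ hne hcs ht2
  -- cone with point PUnit on T ⋙ F
  let c0 : Cone (T ⋙ F) :=
    { pt := Profinite.of PUnit.{u + 1}
      π :=
        { app := fun e => (ConcreteCategory.ofHom (C := Profinite) (ContinuousMap.const _ (u0.1 e).1) : Profinite.of PUnit.{u + 1} ⟶ F.obj e.left)
          naturality := fun e e' φ => by
            ext z
            show (u0.1 e').1 = F.map φ.left (u0.1 e).1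
            exact (congrArg Subtype.val (u0.2 φ)).symm } }
  let q : (limit (T ⋙ F) : Profinite.{u}) := limit.lift (T ⋙ F) c0 PUnit.unit
  let xlim : (limit F : Profinite.{u}) := inv (limit.pre F T) q
  let e₀ : Over i := Over.mk (𝟙 i)
  have h1 : limit.π F i xlim = (u0.1 e₀).1 := by
    have hpre : limit.pre F T xlim = q := by
      show (inv (limit.pre F T) ≫ limit.pre F T) q = q
      rw [IsIso.inv_hom_id]
      rfl
    have hπ : limit.π F i xlim = limit.π (T ⋙ F) e₀ (limit.pre F T xlim) := by
      have := congrArg (fun (t : (limit F : Profinite.{u}) ⟶ F.obj (T.obj e₀)) => t xlim)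
        (limit.pre_π F T e₀)
      exact this.symm
    rw [hπ, hpre]
    show (limit.lift (T ⋙ F) c0 ≫ limit.π (T ⋙ F) e₀) PUnit.unit = _
    rw [limit.lift_π]
    rfl
  let x : C.pt := (hC.conePointUniqueUpToIso (limit.isLimit F)).inv xlim
  have h2 : C.π.app i x = limit.π F i xlim := by
    have := congrArg (fun (t : (limit F : Profinite.{u}) ⟶ F.obj i) => t xlim)
      (IsLimit.conePointUniqueUpToIso_inv_comp hC (limit.isLimit F) i)
    exact this
  have h3 := h x
  rw [h2, h1] at h3
  have h4 := (u0.1 e₀).2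
  apply h4
  show g (F.map (𝟙 i) (u0.1 e₀).1) = g' (F.map (𝟙 i) (u0.1 e₀).1)
  rw [F.map_id]
  exact h3

end Aux

/-- Let `I` be a small cofiltered category, let `Y : I → sProfinite` be a
diagram with limit `lim_i Y_i`, let `M` be a finite abelian group with the discrete topology
and let `n ≥ 0`. Then the canonical maps `colim_i C^n(Y_i; M) → C^n(lim_i Y_i; M)` and
`colim_i Z^n(Y_i; M) → Z^n(lim_i Y_i; M)` are bijective. -/
theorem cochains_and_cocycles_colimit_comparison_bijective
    (I : Type u) [SmallCategory I] [IsCofiltered I]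
    (Y : I ⥤ SimplicialObject Profinite.{u})
    (M : Type u) [AddCommGroup M] [Fintype M] [TopologicalSpace M] [DiscreteTopology M]
    (n : ℕ) :
    Function.Bijective (colimit.desc (CnF M I Y n) (CnCocone M I Y n)) ∧
    Function.Bijective (colimit.desc (ZnF M I Y n) (ZnCocone M I Y n)) := by
  classical
  let E := (CategoryTheory.evaluation SimplexCategoryᵒᵖ Profinite.{u}).obj (op (SimplexCategory.mk n))
  let E' := (CategoryTheory.evaluation SimplexCategoryᵒᵖ Profinite.{u}).obj (op (SimplexCategory.mk (n + 1)))
  let FL : I ⥤ Profinite.{u} := Y ⋙ E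
  let FL' : I ⥤ Profinite.{u} := Y ⋙ E'
  let Cc : Cone FL := E.mapCone (limit.cone Y)
  let Cc' : Cone FL' := E'.mapCone (limit.cone Y)
  have hCc : IsLimit Cc := isLimitOfPreserves E (limit.isLimit Y)
  have hCc' : IsLimit Cc' := isLimitOfPreserves E' (limit.isLimit Y)
  have surj : ∀ β : C((limit Y).obj (op (SimplexCategory.mk n)), M), ∃ (j : I) (gc : C((Y.obj j).obj (op (SimplexCategory.mk n)), M)),
      gc.comp (𝔥 ((limit.π Y j).app (op (SimplexCategory.mk n)))) = β := by
    intro β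
    obtain ⟨j, gl, hgl⟩ := Profinite.exists_locallyConstant Cc hCc
      ⟨β, (IsLocallyConstant.iff_continuous (β : (limit Y).obj (op (SimplexCategory.mk n)) → M)).mpr β.continuous⟩
    refine ⟨j, ⟨gl, gl.continuous⟩, ?_⟩
    ext x
    have := congrArg (fun (t : LocallyConstant Cc.pt M) => t x) hgl
    exact this.symm
  have inj : ∀ (k : I) (a b : C((Y.obj k).obj (op (SimplexCategory.mk n)), M)),
      a.comp (𝔥 ((limit.π Y k).app (op (SimplexCategory.mk n)))) = b.comp (𝔥 ((limit.π Y k).app (op (SimplexCategory.mk n)))) →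
      ∃ (j : I) (f : j ⟶ k), a.comp (𝔥 ((Y.map f).app (op (SimplexCategory.mk n)))) = b.comp (𝔥 ((Y.map f).app (op (SimplexCategory.mk n)))) := by
    intro k a b hab
    obtain ⟨j, f, hf⟩ := exists_comp_eq_of_comp_pi_eq FL M Cc hCc k a b
      (fun x => ContinuousMap.congr_fun hab x)
    exact ⟨j, f, ContinuousMap.ext hf⟩
  have inj' : ∀ (k : I) (a b : C((Y.obj k).obj (op (SimplexCategory.mk (n + 1))), M)),
      a.comp (𝔥 ((limit.π Y k).app (op (SimplexCategory.mk (n + 1))))) = b.comp (𝔥 ((limit.π Y k).app (op (SimplexCategory.mk (n + 1))))) →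
      ∃ (j : I) (f : j ⟶ k), a.comp (𝔥 ((Y.map f).app (op (SimplexCategory.mk (n + 1))))) = b.comp (𝔥 ((Y.map f).app (op (SimplexCategory.mk (n + 1))))) := by
    intro k a b hab
    obtain ⟨j, f, hf⟩ := exists_comp_eq_of_comp_pi_eq FL' M Cc' hCc' k a b
      (fun x => ContinuousMap.congr_fun hab x)
    exact ⟨j, f, ContinuousMap.ext hf⟩
  have hdesc : ∀ (i : Iᵒᵖ) (a : (CnF M I Y n).obj i),
      colimit.desc (CnF M I Y n) (CnCocone M I Y n) (colimit.ι (CnF M I Y n) i a) =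
        a.comp (𝔥 ((limit.π Y i.unop).app (op (SimplexCategory.mk n)))) :=
    fun i a => ConcreteCategory.congr_hom (colimit.ι_desc (CnCocone M I Y n) i) a
  have hdescZ : ∀ (i : Iᵒᵖ) (a : (ZnF M I Y n).obj i),
      (colimit.desc (ZnF M I Y n) (ZnCocone M I Y n) (colimit.ι (ZnF M I Y n) i a)).1 =
        a.1.comp (𝔥 ((limit.π Y i.unop).app (op (SimplexCategory.mk n)))) :=
    fun i a => congrArg Subtype.val (ConcreteCategory.congr_hom (colimit.ι_desc (ZnCocone M I Y n) i) a)
  constructor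
  · constructor
    · intro x y hxy
      obtain ⟨i₁, a₁, rfl⟩ := Types.jointly_surjective' x
      obtain ⟨i₂, b₁, rfl⟩ := Types.jointly_surjective' y
      let k := IsFiltered.max i₁ i₂
      let a₂ : (CnF M I Y n).obj k := (CnF M I Y n).map (IsFiltered.leftToMax i₁ i₂) a₁
      let b₂ : (CnF M I Y n).obj k := (CnF M I Y n).map (IsFiltered.rightToMax i₁ i₂) b₁
      have hwa : colimit.ι (CnF M I Y n) k a₂ = colimit.ι (CnF M I Y n) i₁ a₁ :=
        Types.Colimit.w_apply (IsFiltered.leftToMax i₁ i₂)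
      have hwb : colimit.ι (CnF M I Y n) k b₂ = colimit.ι (CnF M I Y n) i₂ b₁ :=
        Types.Colimit.w_apply (IsFiltered.rightToMax i₁ i₂)
      have h2 : a₂.comp (𝔥 ((limit.π Y k.unop).app (op (SimplexCategory.mk n)))) = b₂.comp (𝔥 ((limit.π Y k.unop).app (op (SimplexCategory.mk n)))) := by
        rw [← hdesc k a₂, ← hdesc k b₂, hwa, hwb]
        exact hxy
      obtain ⟨j, f, hf⟩ := inj k.unop a₂ b₂ h2
      rw [← hwa, ← hwb]
      rw [← Types.Colimit.w_apply (F := CnF M I Y n) f.op (x := a₂),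
        ← Types.Colimit.w_apply (F := CnF M I Y n) f.op (x := b₂)]
      exact congrArg (colimit.ι (CnF M I Y n) (op j))
        (show (CnF M I Y n).map f.op a₂ = (CnF M I Y n).map f.op b₂ from hf)
    · intro β
      obtain ⟨j, gc, hgc⟩ := surj β
      exact ⟨colimit.ι (CnF M I Y n) (op j) gc, by rw [hdesc (op j) gc]; exact hgc⟩
  · constructor
    · intro x y hxy
      obtain ⟨i₁, a₁, rfl⟩ := Types.jointly_surjective' x
      obtain ⟨i₂, b₁, rfl⟩ := Types.jointly_surjective' y
      let k := IsFiltered.max i₁ i₂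
      let a₂ : (ZnF M I Y n).obj k := (ZnF M I Y n).map (IsFiltered.leftToMax i₁ i₂) a₁
      let b₂ : (ZnF M I Y n).obj k := (ZnF M I Y n).map (IsFiltered.rightToMax i₁ i₂) b₁
      have hwa : colimit.ι (ZnF M I Y n) k a₂ = colimit.ι (ZnF M I Y n) i₁ a₁ :=
        Types.Colimit.w_apply (IsFiltered.leftToMax i₁ i₂)
      have hwb : colimit.ι (ZnF M I Y n) k b₂ = colimit.ι (ZnF M I Y n) i₂ b₁ :=
        Types.Colimit.w_apply (IsFiltered.rightToMax i₁ i₂)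
      have h2 : a₂.1.comp (𝔥 ((limit.π Y k.unop).app (op (SimplexCategory.mk n)))) = b₂.1.comp (𝔥 ((limit.π Y k.unop).app (op (SimplexCategory.mk n)))) := by
        rw [← hdescZ k a₂, ← hdescZ k b₂, hwa, hwb]
        exact congrArg Subtype.val hxy
      obtain ⟨j, f, hf⟩ := inj k.unop a₂.1 b₂.1 h2
      rw [← hwa, ← hwb]
      rw [← Types.Colimit.w_apply (F := ZnF M I Y n) f.op (x := a₂),
        ← Types.Colimit.w_apply (F := ZnF M I Y n) f.op (x := b₂)]
      exact congrArg (colimit.ι (ZnF M I Y n) (op j))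
        (show (ZnF M I Y n).map f.op a₂ = (ZnF M I Y n).map f.op b₂ from Subtype.ext hf)
    · intro β
      obtain ⟨j, gc, hgc⟩ := surj β.1
      have hδ : (delta M (Y.obj j) n gc).comp (𝔥 ((limit.π Y j).app (op (SimplexCategory.mk (n + 1))))) =
          (0 : C((Y.obj j).obj (op (SimplexCategory.mk (n + 1))), M)).comp (𝔥 ((limit.π Y j).app (op (SimplexCategory.mk (n + 1))))) := by
        have h1 := delta_comp M (limit.π Y j) n gc
        rw [show gc.comp (𝔥 ((limit.π Y j).app (op (SimplexCategory.mk n)))) = β.1 from hgc] at h1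
        rw [β.2] at h1
        ext x
        exact (ContinuousMap.congr_fun h1 x).symm
      obtain ⟨j₀, f₀, hf₀⟩ := inj' j (delta M (Y.obj j) n gc) 0 hδ
      refine ⟨colimit.ι (ZnF M I Y n) (op j₀)
        ⟨gc.comp (𝔥 ((Y.map f₀).app (op (SimplexCategory.mk n)))), ?_⟩, ?_⟩
      · rw [delta_comp M (Y.map f₀) n gc, hf₀]
        ext x
        rfl
      · apply Subtype.ext
        refine (hdescZ (op j₀) _).trans ?_
        show (gc.comp (𝔥 ((Y.map f₀).app (op (SimplexCategory.mk n))))).comp (𝔥 ((limit.π Y j₀).app (op (SimplexCategory.mk n)))) = β.1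
        rw [ContinuousMap.comp_assoc]
        rw [show (ContinuousMap.comp (𝔥 ((Y.map f₀).app (op (SimplexCategory.mk n))))
            (𝔥 ((limit.π Y j₀).app (op (SimplexCategory.mk n)))) :
              C((limit Y).obj (op (SimplexCategory.mk n)), _)) =
          (𝔥 ((limit.π Y j).app (op (SimplexCategory.mk n))) : C(_, _)) from
            pi_app_eq I Y n (f₀.op : op j ⟶ op j₀)]
        exact hgc
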